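/- Let K ≥ 0 be a constant such that for every N and every family u_1, …, u_N : ℝ⁴ → ℝ of continuously differentiable, 2π-periodic functions that are orthonormal in L²([0,2π]⁴) and satisfy ∫_{[0,2π]⁴} u_j dx = 0, one has ∫_{[0,2π]⁴} ( Σ_{j=1}^N u_j(x)² )^{3/2} dx ≤ K · Σ_{j=1}^N ∫_{[0,2π]⁴} |∇u_j(x)|² dx. Then K ≥ 3/(16π²). -/

import Mathlib

open Real MeasureTheory

/-- The cube `[0, 2π]⁴ ⊆ ℝ⁴`, a fundamental domain of the `4`-torus. -/
def torusCube : Set (EuclideanSpace ℝ (Fin 4)) :=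
  {x | ∀ i, x i ∈ Set.Icc (0 : ℝ) (2 * π)}

noncomputable section
namespace Stmt3Aux

abbrev E4 := EuclideanSpace ℝ (Fin 4)

lemma pi_prod_integral (F : Fin 4 → ℝ → ℝ) :
    (∫ x : Fin 4 → ℝ in Set.pi Set.univ (fun _ => Set.Icc (0:ℝ) (2*π)), ∏ i, F i (x i))
      = ∏ i, ∫ t in Set.Icc (0:ℝ) (2*π), F i t := by
  have hs : MeasurableSet (Set.pi Set.univ fun _ : Fin 4 => Set.Icc (0:ℝ) (2*π)) :=
    MeasurableSet.univ_pi fun _ => measurableSet_Icc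
  rw [← integral_indicator hs]
  have key : ∀ x : Fin 4 → ℝ,
      (Set.pi Set.univ fun _ => Set.Icc (0:ℝ) (2*π)).indicator (fun y => ∏ i, F i (y i)) x
        = ∏ i, (Set.Icc (0:ℝ) (2*π)).indicator (F i) (x i) := by
    intro x
    by_cases h : x ∈ Set.pi Set.univ fun _ => Set.Icc (0:ℝ) (2*π)
    · rw [Set.indicator_of_mem h]
      exact Finset.prod_congr rfl fun i _ => (Set.indicator_of_mem (h i trivial) _).symm
    · rw [Set.indicator_of_notMem h]
      rw [Set.mem_pi] at h
      push_neg at h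
      obtain ⟨i, -, hi⟩ := h
      exact (Finset.prod_eq_zero (Finset.mem_univ i) (Set.indicator_of_notMem hi _)).symm
  simp_rw [key]
  rw [volume_pi, integral_fintype_prod_eq_prod (𝕜 := ℝ)
    (fun i => (Set.Icc (0:ℝ) (2*π)).indicator (F i))]
  exact Finset.prod_congr rfl fun i _ => integral_indicator measurableSet_Icc

lemma cube_integral (f : ℝ → ℝ) :
    (∫ x : E4 in torusCube, f (x 0)) = (2*π)^3 * ∫ t in Set.Icc (0:ℝ) (2*π), f t := by
  have hemb := (MeasurableEquiv.toLp 2 (Fin 4 → ℝ)).symm.measurableEmbedding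
  have hmp := EuclideanSpace.volume_preserving_symm_measurableEquiv_toLp (Fin 4)
  have hset : torusCube = (MeasurableEquiv.toLp 2 (Fin 4 → ℝ)).symm ⁻¹'
      (Set.pi Set.univ fun _ : Fin 4 => Set.Icc (0:ℝ) (2*π)) := by
    ext x
    simp only [torusCube, Set.mem_setOf_eq, Set.mem_preimage, Set.mem_univ_pi]
    exact Iff.rfl
  have h1 : (∫ x : E4 in torusCube, f (x 0))
      = ∫ y : Fin 4 → ℝ in Set.pi Set.univ (fun _ => Set.Icc (0:ℝ) (2*π)), f (y 0) := by
    rw [hset]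
    exact hmp.setIntegral_preimage_emb hemb (fun y => f (y 0)) _
  rw [h1]
  set F : Fin 4 → ℝ → ℝ := (fun i => if i = 0 then f else fun _ => (1:ℝ)) with hF
  have h2 := pi_prod_integral F
  have h3 : ∀ y : Fin 4 → ℝ, (∏ i, F i (y i)) = f (y 0) := by
    intro y
    rw [Fin.prod_univ_four]
    simp [hF]
  simp_rw [h3] at h2
  rw [h2, Fin.prod_univ_four]
  have hone : (∫ t in Set.Icc (0:ℝ) (2*π), (1:ℝ)) = 2*π := by
    rw [setIntegral_const, Real.volume_real_Icc_of_le (by nlinarith [pi_pos]), smul_eq_mul, mul_one]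
    ring
  have hne1 : (1 : Fin 4) ≠ 0 := by decide
  have hne2 : (2 : Fin 4) ≠ 0 := by decide
  have hne3 : (3 : Fin 4) ≠ 0 := by decide
  simp only [hF, if_pos rfl, if_neg hne1, if_neg hne2, if_neg hne3]
  rw [hone]
  ring

lemma icc_eq (f : ℝ → ℝ) :
    (∫ t in Set.Icc (0:ℝ) (2*π), f t) = ∫ t in (0:ℝ)..(2*π), f t := by
  rw [integral_Icc_eq_integral_Ioc, intervalIntegral.integral_of_le (by nlinarith [pi_pos])]

lemma hasGradient_comp (g : ℝ → ℝ) (g' : ℝ) (x : E4) (hg : HasDerivAt g g' (x 0)) :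
    HasGradientAt (fun y : E4 => g (y 0)) (g' • EuclideanSpace.single (0 : Fin 4) (1:ℝ)) x := by
  have h1 : HasFDerivAt (fun y : E4 => g (y 0))
      (g' • (EuclideanSpace.proj (0:Fin 4) : E4 →L[ℝ] ℝ)) x := by
    exact HasDerivAt.comp_hasFDerivAt x hg
      ((EuclideanSpace.proj (0:Fin 4)) : E4 →L[ℝ] ℝ).hasFDerivAt
  rw [hasGradientAt_iff_hasFDerivAt]
  refine h1.congr_fderiv ?_
  ext y
  simp [InnerProductSpace.toDual_apply_apply, real_inner_smul_left,
    EuclideanSpace.inner_single_left]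

lemma norm_grad (g : ℝ → ℝ) (g' : ℝ) (x : E4) (hg : HasDerivAt g g' (x 0)) :
    ‖gradient (fun y : E4 => g (y 0)) x‖ ^ 2 = g' ^ 2 := by
  rw [(hasGradient_comp g g' x hg).gradient, norm_smul, EuclideanSpace.norm_single]
  simp [mul_pow, sq_abs]

end Stmt3Aux
end

open Stmt3Aux in
/-- Lower bound for the Lieb–Thirring constant on `T⁴`: if `K ≥ 0` is such
that `∫_{[0,2π]⁴} (∑ⱼ uⱼ²)^{3/2} dx ≤ K ∑ⱼ ∫_{[0,2π]⁴} |∇uⱼ|² dx` for every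
finite family of continuously differentiable, `2π`-periodic functions that are
orthonormal in `L²([0,2π]⁴)` with zero mean, then `K ≥ 3/(16π²)`. -/
theorem stmt_3 (K : ℝ) (hK : 0 ≤ K)
    (hLT : ∀ (N : ℕ) (u : Fin N → EuclideanSpace ℝ (Fin 4) → ℝ),
      (∀ j, ContDiff ℝ 1 (u j)) →
      (∀ j (k : Fin 4 → ℤ) (x : EuclideanSpace ℝ (Fin 4)),
        u j (x + (EuclideanSpace.equiv (Fin 4) ℝ).symm
          (fun i => 2 * π * (k i : ℝ))) = u j x) →
      (∀ i j, (∫ x in torusCube, u i x * u j x) = if i = j then 1 else 0) →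
      (∀ j, (∫ x in torusCube, u j x) = 0) →
      (∫ x in torusCube, (∑ j, u j x ^ 2) ^ (3 / 2 : ℝ))
        ≤ K * ∑ j, ∫ x in torusCube, ‖gradient (u j) x‖ ^ 2) :
    3 / (16 * π ^ 2) ≤ K := by
  set s : ℝ := Real.sqrt 2 with hs_def
  have hs2 : s ^ 2 = 2 := Real.sq_sqrt (by norm_num)
  have hs0 : 0 < s := Real.sqrt_pos.2 (by norm_num)
  have hπ : 0 < π := pi_pos
  set A : ℝ := 2 * s * π ^ 2 with hA_def
  have hA0 : 0 < A := by positivity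
  have hA2 : A ^ 2 = 8 * π ^ 4 := by
    have : A ^ 2 = 4 * s ^ 2 * π ^ 4 := by ring
    rw [this, hs2]; ring
  set u : Fin 2 → E4 → ℝ :=
    ![fun x => Real.cos (x 0) / A, fun x => Real.sin (x 0) / A] with hu_def
  have hu0 : u 0 = fun x : E4 => Real.cos (x 0) / A := rfl
  have hu1 : u 1 = fun x : E4 => Real.sin (x 0) / A := rfl
  -- smoothness
  have hsmooth : ∀ j, ContDiff ℝ 1 (u j) := by
    intro j
    fin_cases j
    · exact ((Real.contDiff_cos.comp
        ((EuclideanSpace.proj (0:Fin 4)) : E4 →L[ℝ] ℝ).contDiff).div_const A).of_le le_top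
    · exact ((Real.contDiff_sin.comp
        ((EuclideanSpace.proj (0:Fin 4)) : E4 →L[ℝ] ℝ).contDiff).div_const A).of_le le_top
  -- periodicity
  have hper : ∀ j (k : Fin 4 → ℤ) (x : E4),
      u j (x + (EuclideanSpace.equiv (Fin 4) ℝ).symm
        (fun i => 2 * π * (k i : ℝ))) = u j x := by
    intro j k x
    have hco : ((x + (EuclideanSpace.equiv (Fin 4) ℝ).symm
        (fun i => 2*π*(k i:ℝ))) 0) = x 0 + 2*π*(k 0) := rfl
    fin_cases j
    · show Real.cos _ / A = Real.cos _ / A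
      rw [hco, show x 0 + 2*π*(k 0 : ℝ) = x 0 + (k 0 : ℝ)*(2*π) by ring,
        Real.cos_add_int_mul_two_pi]
    · show Real.sin _ / A = Real.sin _ / A
      rw [hco, show x 0 + 2*π*(k 0 : ℝ) = x 0 + (k 0 : ℝ)*(2*π) by ring,
        Real.sin_add_int_mul_two_pi]
  -- generic product integral
  have hprod : ∀ f g : ℝ → ℝ,
      (∫ x : E4 in torusCube, (f (x 0) / A) * (g (x 0) / A))
        = (2*π)^3 * (∫ t in (0:ℝ)..(2*π), f t * g t) / A ^ 2 := by
    intro f g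
    rw [show (∫ x : E4 in torusCube, (f (x 0) / A) * (g (x 0) / A))
        = (2*π)^3 * ∫ t in Set.Icc (0:ℝ) (2*π), (f t / A) * (g t / A) from
      cube_integral (fun t => (f t / A) * (g t / A)), icc_eq (fun t => f t / A * (g t / A))]
    have : ∀ t : ℝ, f t / A * (g t / A) = (f t * g t) / A ^ 2 := by
      intro t; rw [div_mul_div_comm, ← pow_two]
    simp_rw [this]
    rw [intervalIntegral.integral_div]
    ring
  -- orthonormality
  have h00 : (∫ x in torusCube, u 0 x * u 0 x) = 1 := by
    rw [show (∫ x in torusCube, u 0 x * u 0 x)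
        = (2*π)^3 * (∫ t in (0:ℝ)..(2*π), Real.cos t * Real.cos t) / A^2 from
      hprod Real.cos Real.cos]
    have : (∫ t in (0:ℝ)..(2*π), Real.cos t * Real.cos t) = π := by
      simp_rw [← sq]
      rw [integral_cos_sq]
      simp [Real.sin_two_pi, Real.cos_two_pi]
    rw [this, hA2, div_eq_one_iff_eq (by positivity)]
    ring
  have h01 : (∫ x in torusCube, u 0 x * u 1 x) = 0 := by
    rw [show (∫ x in torusCube, u 0 x * u 1 x)
        = (2*π)^3 * (∫ t in (0:ℝ)..(2*π), Real.cos t * Real.sin t) / A^2 from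
      hprod Real.cos Real.sin]
    have : (∫ t in (0:ℝ)..(2*π), Real.cos t * Real.sin t) = 0 := by
      simp_rw [show ∀ t : ℝ, Real.cos t * Real.sin t = Real.sin t * Real.cos t from
        fun t => mul_comm _ _]
      rw [integral_sin_mul_cos₁]
      simp [Real.sin_two_pi]
    rw [this]
    ring
  have h10 : (∫ x in torusCube, u 1 x * u 0 x) = 0 := by
    rw [show (∫ x in torusCube, u 1 x * u 0 x)
        = (2*π)^3 * (∫ t in (0:ℝ)..(2*π), Real.sin t * Real.cos t) / A^2 from
      hprod Real.sin Real.cos]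
    have : (∫ t in (0:ℝ)..(2*π), Real.sin t * Real.cos t) = 0 := by
      rw [integral_sin_mul_cos₁]
      simp [Real.sin_two_pi]
    rw [this]
    ring
  have h11 : (∫ x in torusCube, u 1 x * u 1 x) = 1 := by
    rw [show (∫ x in torusCube, u 1 x * u 1 x)
        = (2*π)^3 * (∫ t in (0:ℝ)..(2*π), Real.sin t * Real.sin t) / A^2 from
      hprod Real.sin Real.sin]
    have : (∫ t in (0:ℝ)..(2*π), Real.sin t * Real.sin t) = π := by
      simp_rw [← sq]
      rw [integral_sin_sq]
      simp [Real.sin_two_pi]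
    rw [this, hA2, div_eq_one_iff_eq (by positivity)]
    ring
  have horth : ∀ i j, (∫ x in torusCube, u i x * u j x) = if i = j then 1 else 0 := by
    intro i j
    fin_cases i <;> fin_cases j
    · rw [if_pos rfl]; exact h00
    · rw [if_neg (by decide)]; exact h01
    · rw [if_neg (by decide)]; exact h10
    · rw [if_pos rfl]; exact h11
  -- zero mean
  have hm0 : (∫ x in torusCube, u 0 x) = 0 := by
    rw [show (∫ x in torusCube, u 0 x)
        = (2*π)^3 * ∫ t in Set.Icc (0:ℝ) (2*π), Real.cos t / A from
      cube_integral (fun t => Real.cos t / A), icc_eq (fun t => Real.cos t / A)]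
    rw [intervalIntegral.integral_div, integral_cos]
    simp [Real.sin_two_pi]
  have hm1 : (∫ x in torusCube, u 1 x) = 0 := by
    rw [show (∫ x in torusCube, u 1 x)
        = (2*π)^3 * ∫ t in Set.Icc (0:ℝ) (2*π), Real.sin t / A from
      cube_integral (fun t => Real.sin t / A), icc_eq (fun t => Real.sin t / A)]
    rw [intervalIntegral.integral_div, integral_sin]
    simp [Real.cos_two_pi]
  have hmean : ∀ j, (∫ x in torusCube, u j x) = 0 := by
    intro j
    fin_cases j
    · exact hm0
    · exact hm1
  -- gradient integrals
  have hgrad0 : (∫ x in torusCube, ‖gradient (u 0) x‖ ^ 2) = 1 := by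
    have hptw : ∀ x : E4, ‖gradient (u 0) x‖ ^ 2 = (Real.sin (x 0))^2 / A^2 := by
      intro x
      rw [hu0, norm_grad (fun t => Real.cos t / A) (-Real.sin (x 0) / A) x
        ((Real.hasDerivAt_cos (x 0)).div_const A)]
      ring
    simp_rw [hptw]
    rw [show (∫ x : E4 in torusCube, (Real.sin (x 0))^2 / A^2)
        = (2*π)^3 * ∫ t in Set.Icc (0:ℝ) (2*π), (Real.sin t)^2 / A^2 from
      cube_integral (fun t => (Real.sin t)^2 / A^2),
      icc_eq (fun t => (Real.sin t)^2 / A^2), intervalIntegral.integral_div,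
      integral_sin_sq]
    rw [hA2]
    simp only [Real.sin_two_pi, Real.sin_zero, Real.cos_zero, Real.cos_two_pi]
    field_simp
    ring
  have hgrad1 : (∫ x in torusCube, ‖gradient (u 1) x‖ ^ 2) = 1 := by
    have hptw : ∀ x : E4, ‖gradient (u 1) x‖ ^ 2 = (Real.cos (x 0))^2 / A^2 := by
      intro x
      rw [hu1, norm_grad (fun t => Real.sin t / A) (Real.cos (x 0) / A) x
        ((Real.hasDerivAt_sin (x 0)).div_const A)]
      ring
    simp_rw [hptw]
    rw [show (∫ x : E4 in torusCube, (Real.cos (x 0))^2 / A^2)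
        = (2*π)^3 * ∫ t in Set.Icc (0:ℝ) (2*π), (Real.cos t)^2 / A^2 from
      cube_integral (fun t => (Real.cos t)^2 / A^2),
      icc_eq (fun t => (Real.cos t)^2 / A^2), intervalIntegral.integral_div,
      integral_cos_sq]
    rw [hA2]
    simp only [Real.sin_two_pi, Real.sin_zero, Real.cos_zero, Real.cos_two_pi]
    field_simp
    ring
  -- left-hand side
  have hsum : ∀ x : E4, (∑ j, u j x ^ 2) = 1 / A ^ 2 := by
    intro x
    rw [Fin.sum_univ_two, hu0, hu1, div_pow, div_pow, ← add_div,
      Real.cos_sq_add_sin_sq]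
  have hlhs : (∫ x in torusCube, (∑ j, u j x ^ 2) ^ (3 / 2 : ℝ)) = (2*π)^4 * (1/A)^3 := by
    have hc : ∀ x : E4, (∑ j, u j x ^ 2) ^ (3 / 2 : ℝ) = (1/A)^3 := by
      intro x
      rw [hsum x, show (1 / A ^ 2 : ℝ) = ((1/A)^(2:ℕ) : ℝ) by ring,
        ← Real.rpow_natCast (1/A) 2, ← Real.rpow_mul (by positivity)]
      norm_num
    simp_rw [hc]
    rw [show (∫ x : E4 in torusCube, ((1/A)^3 : ℝ))
        = (2*π)^3 * ∫ t in Set.Icc (0:ℝ) (2*π), ((1/A)^3 : ℝ) from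
      cube_integral (fun _ => (1/A)^3), icc_eq (fun _ => ((1/A)^3 : ℝ))]
    rw [intervalIntegral.integral_const, smul_eq_mul]
    ring
  -- apply hypothesis
  have h := hLT 2 u hsmooth hper horth hmean
  rw [hlhs, Fin.sum_univ_two, hgrad0, hgrad1] at h
  -- numerics
  have hs3 : s ^ 3 = 2 * s := by
    rw [pow_succ, hs2]
  have hA3 : A ^ 3 = 16 * s * π ^ 6 := by
    have : A ^ 3 = 8 * s ^ 3 * π ^ 6 := by ring
    rw [this, hs3]; ring
  have hval : (2*π)^4 * (1/A)^3 = 1 / (s * π ^ 2) := by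
    rw [show ((1/A)^3 : ℝ) = 1 / A^3 by ring, hA3]
    field_simp
    ring
  rw [hval] at h
  have hsle : s ≤ 3/2 := by nlinarith
  rw [div_le_iff₀ (by positivity)] at h
  rw [div_le_iff₀ (by positivity)]
  nlinarith [mul_nonneg (mul_nonneg hK (sq_nonneg π)) (sub_nonneg.2 hsle)]
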